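/- Let a : ℝ³ → ℝ be radial (i.e., a(x) = a(y) whenever |x| = |y|) and Lipschitz with constant L (|a(x) − a(y)| ≤ L|x − y| for all x, y). Let j ≥ 1, let ω₁, …, ω_j ∈ ℝ³ be unit vectors, let t₁, …, t_j ∈ ℝ and x ∈ ℝ³, and set σ := 2 ω_j · (x + t₁ω₁ + ⋯ + t_{j−1}ω_{j−1}). Then |a(x) − a(x + t₁ω₁ + ⋯ + t_jω_j)| ≤ L ( |t₁| + ⋯ + |t_{j−1}| + |t_j + σ| ). -/
import Mathlib


open scoped RealInnerProductSpace

/-- The geometric inequality from Step 1 of the proof of Theorem 3.4: a radial Lipschitz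
function is insensitive to the reflection `z ↦ z − 2(z·ω)ω`, so the increment along
`t₁ω₁ + ⋯ + t_jω_j` is controlled by `|t₁| + ⋯ + |t_{j−1}| + |t_j + σ|` with
`σ = 2 ω_j · (x + t₁ω₁ + ⋯ + t_{j−1}ω_{j−1})`.  (Here the number of directions is `j + 1 ≥ 1`,
with `ω_{j+1} = ω (Fin.last j)`.) -/
theorem radial_lipschitz_reflection_increment
    (a : EuclideanSpace ℝ (Fin 3) → ℝ) (L : ℝ)
    (hrad : ∀ x y : EuclideanSpace ℝ (Fin 3), ‖x‖ = ‖y‖ → a x = a y)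
    (hlip : ∀ x y : EuclideanSpace ℝ (Fin 3), |a x - a y| ≤ L * ‖x - y‖)
    (j : ℕ)
    (ω : Fin (j + 1) → EuclideanSpace ℝ (Fin 3)) (hω : ∀ i, ‖ω i‖ = 1)
    (t : Fin (j + 1) → ℝ) (x : EuclideanSpace ℝ (Fin 3)) :
    |a x - a (x + ∑ i : Fin (j + 1), t i • ω i)|
      ≤ L * ((∑ i : Fin j, |t i.castSucc|) +
          |t (Fin.last j) +
            2 * ⟪ω (Fin.last j), x + ∑ i : Fin j, t i.castSucc • ω i.castSucc⟫|) := by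
  set ωj := ω (Fin.last j) with hωj
  set y := x + ∑ i : Fin j, t i.castSucc • ω i.castSucc with hy
  set c := t (Fin.last j) + 2 * ⟪ωj, y⟫ with hc
  have hL : 0 ≤ L := by
    have h := hlip x (x + ω 0)
    have hn : ‖x - (x + ω 0)‖ = 1 := by
      have : x - (x + ω 0) = -(ω 0) := by abel
      rw [this, norm_neg, hω 0]
    rw [hn, mul_one] at h
    exact le_trans (abs_nonneg _) h
  have hsum : x + ∑ i : Fin (j + 1), t i • ω i = y + t (Fin.last j) • ωj := by
    rw [Fin.sum_univ_castSucc, hy]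
    abel
  have h1 : ∀ s : ℝ, ‖y + s • ωj‖ ^ 2 = ‖y‖ ^ 2 + 2 * s * ⟪ωj, y⟫ + s ^ 2 := by
    intro s
    rw [norm_add_sq_real, real_inner_smul_right, norm_smul, real_inner_comm]
    have h : ‖ωj‖ = 1 := hω _
    rw [h]
    simp [abs_sq]
    ring
  have hnorm : ‖y + t (Fin.last j) • ωj‖ = ‖y + (-c) • ωj‖ := by
    have h2 := h1 (t (Fin.last j))
    have h3 := h1 (-c)
    have hsq : ‖y + t (Fin.last j) • ωj‖ ^ 2 = ‖y + (-c) • ωj‖ ^ 2 := by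
      rw [h2, h3, hc]; ring
    nlinarith [norm_nonneg (y + t (Fin.last j) • ωj), norm_nonneg (y + (-c) • ωj)]
  have ha : a (x + ∑ i : Fin (j + 1), t i • ω i) = a (y + (-c) • ωj) := by
    rw [hsum]; exact hrad _ _ hnorm
  rw [ha]
  have hbd : ‖x - (y + (-c) • ωj)‖ ≤ (∑ i : Fin j, |t i.castSucc|) + |c| := by
    have hrw : x - (y + (-c) • ωj) = c • ωj - ∑ i : Fin j, t i.castSucc • ω i.castSucc := by
      rw [hy, hc]; module
    rw [hrw]
    calc ‖c • ωj - ∑ i : Fin j, t i.castSucc • ω i.castSucc‖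
        ≤ ‖c • ωj‖ + ‖∑ i : Fin j, t i.castSucc • ω i.castSucc‖ := norm_sub_le _ _
      _ ≤ |c| + ∑ i : Fin j, |t i.castSucc| := by
          refine add_le_add ?_ ?_
          · rw [norm_smul, hω, mul_one]; rfl
          · refine le_trans (norm_sum_le _ _) ?_
            refine Finset.sum_le_sum fun i _ => ?_
            rw [norm_smul, hω, mul_one]; rfl
      _ = (∑ i : Fin j, |t i.castSucc|) + |c| := by ring
  calc |a x - a (y + (-c) • ωj)| ≤ L * ‖x - (y + (-c) • ωj)‖ := hlip _ _
    _ ≤ L * ((∑ i : Fin j, |t i.castSucc|) + |c|) := by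
        exact mul_le_mul_of_nonneg_left hbd hL
    _ = L * ((∑ i : Fin j, |t i.castSucc|) +
          |t (Fin.last j) + 2 * ⟪ωj, y⟫|) := by rw [hc]
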